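/- Let R : ℝ^d → ℝ be twice continuously differentiable with L₂-Lipschitz Hessian, where L₂ > 0, and let λ > 0. Suppose w and v are two distinct points with ∇R(w) = 0, ∇R(v) = 0, and ⟨u, ∇²R(w) u⟩ ≥ λ‖u‖² and ⟨u, ∇²R(v) u⟩ ≥ λ‖u‖² for every u ∈ ℝ^d. Then ‖w − v‖ ≥ 4λ/L₂. -/

import Mathlib

open scoped RealInnerProductSpace

set_option maxHeartbeats 1000000 in
/-- Two distinct nondegenerate local minima of a function with `L₂`-Lipschitz Hessian
are at distance at least `4 λ / L₂` from each other. -/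
theorem dist_of_nondegenerate_local_minima
    {d : ℕ} (R : EuclideanSpace ℝ (Fin d) → ℝ)
    (g : EuclideanSpace ℝ (Fin d) → EuclideanSpace ℝ (Fin d))
    (H : EuclideanSpace ℝ (Fin d) → (EuclideanSpace ℝ (Fin d) →L[ℝ] EuclideanSpace ℝ (Fin d)))
    (hg : ∀ x, HasGradientAt R (g x) x)
    (hH : ∀ x, HasFDerivAt g (H x) x)
    (L₂ : ℝ) (hL₂ : 0 < L₂)
    (hlip : ∀ x y, ‖H x - H y‖ ≤ L₂ * ‖x - y‖)
    (lam : ℝ) (hlam : 0 < lam)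
    (w v : EuclideanSpace ℝ (Fin d)) (hwv : w ≠ v)
    (hgw : g w = 0) (hgv : g v = 0)
    (hw : ∀ u, lam * ‖u‖ ^ 2 ≤ ⟪u, H w u⟫)
    (hv : ∀ u, lam * ‖u‖ ^ 2 ≤ ⟪u, H v u⟫) :
    4 * lam / L₂ ≤ ‖w - v‖ := by
  set u := v - w with hu
  have hu0 : u ≠ 0 := sub_ne_zero.mpr hwv.symm
  set r := ‖u‖ with hrdef
  have hr : 0 < r := norm_pos_iff.mpr hu0
  set C := L₂ * r ^ 3 with hC
  set γ : ℝ → EuclideanSpace ℝ (Fin d) := fun t => w + t • u with hγ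
  set φ : ℝ → ℝ := fun t => ⟪u, g (γ t)⟫ with hφ
  set ψ : ℝ → ℝ := fun t => ⟪u, H (γ t) u⟫ with hψ
  have hγ0 : γ 0 = w := by simp [hγ]
  have hγ1 : γ 1 = v := by simp [hγ, hu]
  have hγd : ∀ t : ℝ, HasDerivAt γ u t := by
    intro t
    have : HasDerivAt (fun x : ℝ => x • u) ((1 : ℝ) • u) t :=
      (hasDerivAt_id t).smul_const u
    simpa [hγ] using this.const_add w
  have hderiv : ∀ t : ℝ, HasDerivAt φ (ψ t) t := by
    intro t
    have h1 : HasDerivAt (fun s => g (γ s)) (H (γ t) u) t :=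
      (hH (γ t)).comp_hasDerivAt t (hγd t)
    have h2 := (innerSL ℝ u).hasFDerivAt.comp_hasDerivAt t h1
    exact h2
  -- Lipschitz estimate on ψ
  have hψlip : ∀ s t : ℝ, ψ s - ψ t ≤ C * |s - t| := by
    intro s t
    have h1 : ψ s - ψ t = ⟪u, (H (γ s) - H (γ t)) u⟫ := by
      simp [hψ, inner_sub_right, ContinuousLinearMap.sub_apply]
    have h2 : ⟪u, (H (γ s) - H (γ t)) u⟫ ≤ ‖u‖ * ‖(H (γ s) - H (γ t)) u‖ :=
      real_inner_le_norm _ _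
    have h3 : ‖(H (γ s) - H (γ t)) u‖ ≤ ‖H (γ s) - H (γ t)‖ * ‖u‖ :=
      (H (γ s) - H (γ t)).le_opNorm u
    have h4 : ‖H (γ s) - H (γ t)‖ ≤ L₂ * ‖γ s - γ t‖ := hlip _ _
    have h5 : ‖γ s - γ t‖ = |s - t| * r := by
      have : γ s - γ t = (s - t) • u := by
        simp [hγ, sub_smul]
      rw [this, norm_smul, Real.norm_eq_abs]
    have hrn : (0 : ℝ) ≤ r := hr.le
    calc ψ s - ψ t = ⟪u, (H (γ s) - H (γ t)) u⟫ := h1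
      _ ≤ ‖u‖ * ‖(H (γ s) - H (γ t)) u‖ := h2
      _ ≤ r * (‖H (γ s) - H (γ t)‖ * r) := by
          apply mul_le_mul_of_nonneg_left _ hrn
          calc ‖(H (γ s) - H (γ t)) u‖ ≤ ‖H (γ s) - H (γ t)‖ * ‖u‖ := h3
            _ = ‖H (γ s) - H (γ t)‖ * r := rfl
      _ ≤ r * ((L₂ * (|s - t| * r)) * r) := by
          apply mul_le_mul_of_nonneg_left _ hrn
          apply mul_le_mul_of_nonneg_right _ hrn
          calc ‖H (γ s) - H (γ t)‖ ≤ L₂ * ‖γ s - γ t‖ := h4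
            _ = L₂ * (|s - t| * r) := by rw [h5]
      _ = C * |s - t| := by rw [hC]; ring
  have hφ0 : φ 0 = 0 := by simp [hφ, hγ0, hgw]
  have hφ1 : φ 1 = 0 := by simp [hφ, hγ1, hgv]
  have hψ0 : lam * r ^ 2 ≤ ψ 0 := by simpa [hψ, hγ0] using hw u
  have hψ1 : lam * r ^ 2 ≤ ψ 1 := by simpa [hψ, hγ1] using hv u
  -- first auxiliary function
  set h : ℝ → ℝ := fun t => φ t - ψ 0 * t + C / 2 * t ^ 2 with hh
  have hhd : ∀ t : ℝ, HasDerivAt h (ψ t - ψ 0 + C * t) t := by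
    intro t
    have h1 : HasDerivAt (fun t : ℝ => ψ 0 * t) (ψ 0) t := by
      simpa using (hasDerivAt_id t).const_mul (ψ 0)
    have h2 : HasDerivAt (fun t : ℝ => C / 2 * t ^ 2) (C / 2 * (2 * t)) t := by
      have := (hasDerivAt_pow 2 t).const_mul (C / 2)
      simpa using this
    have := ((hderiv t).sub h1).add h2
    exact this.congr_deriv (by ring)
  have hhmono : MonotoneOn h (Set.Icc 0 1) := by
    apply monotoneOn_of_deriv_nonneg (convex_Icc 0 1)
    · exact fun t _ => ((hhd t).continuousAt).continuousWithinAt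
    · intro t ht
      exact ((hhd t).differentiableAt).differentiableWithinAt
    · intro t ht
      rw [interior_Icc] at ht
      rw [(hhd t).deriv]
      have := hψlip 0 t
      rw [abs_of_nonpos (by linarith [ht.1] : (0:ℝ) - t ≤ 0)] at this
      have hC0 : 0 ≤ C := by positivity
      nlinarith [ht.1, this]
  -- second auxiliary function
  set k : ℝ → ℝ := fun t => φ t - ψ 1 * (t - 1) - C / 2 * (1 - t) ^ 2 with hk
  have hkd : ∀ t : ℝ, HasDerivAt k (ψ t - ψ 1 + C * (1 - t)) t := by
    intro t
    have h1 : HasDerivAt (fun t : ℝ => ψ 1 * (t - 1)) (ψ 1) t := by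
      simpa using ((hasDerivAt_id t).sub_const 1).const_mul (ψ 1)
    have h2 : HasDerivAt (fun t : ℝ => (1 - t : ℝ)) (-1) t := by
      simpa using ((hasDerivAt_id t).const_sub 1)
    have h3 : HasDerivAt (fun t : ℝ => C / 2 * (1 - t) ^ 2)
        (C / 2 * (2 * (1 - t) * (-1))) t := by
      have := (h2.pow 2).const_mul (C / 2)
      simpa [mul_comm, mul_assoc, mul_left_comm] using this
    have := ((hderiv t).sub h1).sub h3
    exact this.congr_deriv (by ring)
  have hkmono : MonotoneOn k (Set.Icc 0 1) := by
    apply monotoneOn_of_deriv_nonneg (convex_Icc 0 1)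
    · exact fun t _ => ((hkd t).continuousAt).continuousWithinAt
    · intro t ht
      exact ((hkd t).differentiableAt).differentiableWithinAt
    · intro t ht
      rw [interior_Icc] at ht
      rw [(hkd t).deriv]
      have := hψlip 1 t
      rw [abs_of_nonneg (by linarith [ht.2] : (0:ℝ) ≤ 1 - t)] at this
      have hC0 : 0 ≤ C := by positivity
      nlinarith [ht.2, this]
  have key1 : h 0 ≤ h (1/2) := hhmono (by norm_num) (by norm_num) (by norm_num)
  have key2 : k (1/2) ≤ k 1 := hkmono (by norm_num) (by norm_num) (by norm_num)
  have e1 : h 0 = 0 := by simp [hh, hφ0]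
  have e2 : k 1 = 0 := by simp [hk, hφ1]
  rw [e1] at key1
  rw [e2] at key2
  simp only [hh, hk] at key1 key2
  -- combine: ψ 0 + ψ 1 ≤ C / 2
  have hsum : ψ 0 + ψ 1 ≤ C / 2 := by
    norm_num at key1 key2
    linarith
  have h4lam : 4 * lam ≤ L₂ * r := by
    have : 2 * (lam * r ^ 2) ≤ L₂ * r ^ 3 / 2 := by
      calc 2 * (lam * r ^ 2) ≤ ψ 0 + ψ 1 := by linarith
        _ ≤ C / 2 := hsum
        _ = L₂ * r ^ 3 / 2 := by rw [hC]
    have h3 : 4 * lam * r ^ 2 ≤ (L₂ * r) * r ^ 2 := by nlinarith [this]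
    exact le_of_mul_le_mul_right (by linarith) (pow_pos hr 2)
  have : ‖w - v‖ = r := by rw [hrdef, hu, norm_sub_rev]
  rw [this, div_le_iff₀ hL₂]
  linarith [h4lam]
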